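/- For every D >= 1 there exists an RNN R = Q∘K with input dimension 1, output dimension 1, and hidden state size 7 such that for all x in [-D, D] and all t in N_0: |(R D x)[t] - x^2| <= (D^2/4) * 4^{-t}, the hidden state satisfies ‖(K D x)[t]‖_∞ <= 1, and the output satisfies 0 <= (R D x)[t] <= D^2. -/
import Mathlib


/-- ReLU applied componentwise. -/
noncomputable def relu {n : Type*} (v : n → ℝ) : n → ℝ := fun i => max 0 (v i)

/-- An RNN with input index type `ι`, hidden state index type `κ`, output index type `ω`,
parametrized by weights `A_h, A_x, A_o, b_h, b_o`. -/
structure RNN (ι κ ω : Type) where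
  Ah : Matrix κ κ ℝ
  Ax : Matrix κ ι ℝ
  Ao : Matrix ω κ ℝ
  bh : κ → ℝ
  bo : ω → ℝ

/-- Hidden state sequence `(K 𝒟 x)[t]` for the input sequence `(𝒟 x)[t] = x·1{t=0}`,
with the convention `h[-1] = 0`:  `h[0] = ρ(A_x x + b_h)`, `h[t+1] = ρ(A_h h[t] + b_h)`. -/
noncomputable def RNN.hid {ι κ ω : Type} [Fintype ι] [Fintype κ] (R : RNN ι κ ω)
    (x : ι → ℝ) : ℕ → κ → ℝ
  | 0 => relu (R.Ax.mulVec x + R.bh)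
  | t + 1 => relu (R.Ah.mulVec (RNN.hid R x t) + R.bh)

/-- Output sequence `(R 𝒟 x)[t] = A_o h[t] + b_o`. -/
noncomputable def RNN.out {ι κ ω : Type} [Fintype ι] [Fintype κ] (R : RNN ι κ ω)
    (x : ι → ℝ) (t : ℕ) : ω → ℝ :=
  R.Ao.mulVec (R.hid x t) + R.bo

/- ### Auxiliary material for the proof -/

@[simp] lemma vec7_0 {α : Type*} (a0 a1 a2 a3 a4 a5 a6 : α) : ![a0,a1,a2,a3,a4,a5,a6] 0 = a0 := rfl
@[simp] lemma vec7_1 {α : Type*} (a0 a1 a2 a3 a4 a5 a6 : α) : ![a0,a1,a2,a3,a4,a5,a6] 1 = a1 := rfl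
@[simp] lemma vec7_2 {α : Type*} (a0 a1 a2 a3 a4 a5 a6 : α) : ![a0,a1,a2,a3,a4,a5,a6] 2 = a2 := rfl
@[simp] lemma vec7_3 {α : Type*} (a0 a1 a2 a3 a4 a5 a6 : α) : ![a0,a1,a2,a3,a4,a5,a6] 3 = a3 := rfl
@[simp] lemma vec7_4 {α : Type*} (a0 a1 a2 a3 a4 a5 a6 : α) : ![a0,a1,a2,a3,a4,a5,a6] 4 = a4 := rfl
@[simp] lemma vec7_5 {α : Type*} (a0 a1 a2 a3 a4 a5 a6 : α) : ![a0,a1,a2,a3,a4,a5,a6] 5 = a5 := rfl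
@[simp] lemma vec7_6 {α : Type*} (a0 a1 a2 a3 a4 a5 a6 : α) : ![a0,a1,a2,a3,a4,a5,a6] 6 = a6 := rfl

/-- The tent map (as a ReLU combination). -/
noncomputable def gg (u : ℝ) : ℝ := 2 * u - 4 * max 0 (u - 1/2)

/-- Iterated tent map. -/
noncomputable def GG (y : ℝ) : ℕ → ℝ
  | 0 => y
  | t + 1 => gg (GG y t)

lemma gg_mem {u : ℝ} (h : u ∈ Set.Icc (0:ℝ) 1) : gg u ∈ Set.Icc (0:ℝ) 1 := by
  rcases le_total u (1/2) with h1 | h1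
  · rw [gg, max_eq_left (by linarith)]
    exact ⟨by linarith [h.1], by linarith⟩
  · rw [gg, max_eq_right (by linarith)]
    exact ⟨by linarith [h.2], by linarith⟩

lemma GG_mem {y : ℝ} (hy : y ∈ Set.Icc (0:ℝ) 1) : ∀ t, GG y t ∈ Set.Icc (0:ℝ) 1
  | 0 => hy
  | t + 1 => gg_mem (GG_mem hy t)

lemma GG_le {y : ℝ} (hy : 0 ≤ y) : ∀ t, GG y t ≤ 2 ^ t * y
  | 0 => by simp [GG]
  | t + 1 => by
      have ih := GG_le hy t
      have hm : (0:ℝ) ≤ max 0 (GG y t - 1/2) := le_max_left _ _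
      have h2 : gg (GG y t) ≤ 2 * GG y t := by unfold gg; linarith
      calc GG y (t+1) = gg (GG y t) := rfl
        _ ≤ 2 * GG y t := h2
        _ ≤ 2 ^ (t+1) * y := by rw [pow_succ]; nlinarith

lemma gg_sq (u : ℝ) : (gg u) ^ 2 = 4 * u ^ 2 - 8 * max 0 (u - 1/2) := by
  rcases le_total u (1/2) with h1 | h1
  · rw [gg, max_eq_left (by linarith)]; ring
  · rw [gg, max_eq_right (by linarith)]; ring

lemma gg_mul (u : ℝ) : gg u * (2 - gg u) = 4 * (u * (1 - u)) := by
  rcases le_total u (1/2) with h1 | h1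
  · rw [gg, max_eq_left (by linarith)]; ring
  · rw [gg, max_eq_right (by linarith)]; ring

lemma relu_mul {a b : ℝ} (ha : 0 ≤ a) : max 0 (a * b) = a * max 0 b := by
  rcases le_total b 0 with h | h
  · rw [max_eq_left (mul_nonpos_of_nonneg_of_nonpos ha h), max_eq_left h, mul_zero]
  · rw [max_eq_right (mul_nonneg ha h), max_eq_right h]

lemma GG_sq_le {y : ℝ} (hy : y ∈ Set.Icc (0:ℝ) 1) (t : ℕ) :
    ((4:ℝ) ^ t)⁻¹ * (GG y t) ^ 2 ≤ y ^ 2 := by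
  have h1 := GG_le hy.1 t
  have h0 := (GG_mem hy t).1
  have h4 : ((2:ℝ) ^ t) ^ 2 = 4 ^ t := by rw [← pow_mul, mul_comm, pow_mul]; norm_num
  have hp : (0:ℝ) < 4 ^ t := by positivity
  have h2 : (0:ℝ) < 2 ^ t := by positivity
  rw [inv_mul_le_iff₀ hp]
  calc GG y t ^ 2 ≤ (2 ^ t * y) ^ 2 := by nlinarith
    _ = 4 ^ t * y ^ 2 := by rw [mul_pow, h4]

lemma F_le {y : ℝ} (hy : y ∈ Set.Icc (0:ℝ) 1) :
    ∀ t : ℕ, y ^ 2 + ((4:ℝ) ^ t)⁻¹ * (GG y t * (1 - GG y t)) ≤ y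
  | 0 => by
      have := hy.1; have := hy.2
      simp only [GG, pow_zero, inv_one, one_mul]
      nlinarith
  | t + 1 => by
      have ih := F_le hy t
      have hG' := GG_mem hy (t+1)
      have key : GG y (t+1) * (2 - GG y (t+1)) = 4 * (GG y t * (1 - GG y t)) := gg_mul _
      have hp : (0:ℝ) < 4 ^ t := by positivity
      have h4 : ((4:ℝ) ^ (t+1))⁻¹ = ((4:ℝ) ^ t)⁻¹ / 4 := by
        rw [pow_succ]; field_simp
      rw [h4]
      have e1 : ((4:ℝ) ^ t)⁻¹ / 4 * (GG y (t+1) * (2 - GG y (t+1)))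
          = ((4:ℝ) ^ t)⁻¹ * (GG y t * (1 - GG y t)) := by
        rw [key]; ring
      have hGnn := hG'.1
      have hinv : (0:ℝ) ≤ ((4:ℝ) ^ t)⁻¹ / 4 := by positivity
      nlinarith

lemma max_add_neg_abs (a : ℝ) : max 0 a + max 0 (-a) = |a| := by
  rcases le_total a 0 with h | h
  · rw [max_eq_left h, max_eq_right (neg_nonneg.mpr h), abs_of_nonpos h, zero_add]
  · rw [max_eq_right h, max_eq_left (neg_nonpos.mpr h), abs_of_nonneg h, add_zero]

lemma max_half_abs (a : ℝ) :
    max 0 (a - 1/2) + max 0 (-a - 1/2) = max 0 (|a| - 1/2) := by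
  rcases le_total a 0 with h | h
  · rw [abs_of_nonpos h, max_eq_left (by linarith : a - 1/2 ≤ 0), zero_add]
  · rw [abs_of_nonneg h, max_eq_left (by linarith : -a - 1/2 ≤ 0), add_zero]

/-- The squaring RNN. -/
noncomputable def sqRNN (D : ℝ) : RNN (Fin 1) (Fin 7) (Fin 1) where
  Ah := Matrix.of
    ![![1/2, 1/2, -1, -1, 0, 0, 0],
      ![0, 0, 0, 0, 0, 0, 0],
      ![1/2, 1/2, -1, -1, 0, -(1/8), 1/2],
      ![0, 0, 0, 0, 0, 0, 0],
      ![0, 0, 2, 2, 1, 0, 0],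
      ![0, 0, 0, 0, 0, 1/4, -1],
      ![0, 0, 0, 0, 0, 0, 0]]
  Ax := Matrix.of ![![1/D], ![-(1/D)], ![1/D], ![-(1/D)], ![0], ![0], ![0]]
  Ao := Matrix.of ![![D^2, D^2, 0, 0, D^2, 0, 0]]
  bh := ![0, 0, -(1/2), -(1/2), 0, 1, 1]
  bo := ![0]

/-- The invariant carried by the hidden state. -/
def SqInv (y : ℝ) (t : ℕ) (h : Fin 7 → ℝ) : Prop :=
  h 0 + h 1 = ((4:ℝ) ^ t)⁻¹ * GG y t ∧
  0 ≤ h 0 ∧ 0 ≤ h 1 ∧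
  h 2 + h 3 = ((4:ℝ) ^ t)⁻¹ * max 0 (GG y t - 1/2) ∧
  0 ≤ h 2 ∧ 0 ≤ h 3 ∧
  h 4 = y ^ 2 - ((4:ℝ) ^ t)⁻¹ * (GG y t) ^ 2 ∧
  h 5 = ((4:ℝ) ^ t)⁻¹ ∧
  h 6 = 1

lemma sq_base {D : ℝ} (hD : 1 ≤ D) (x : ℝ) :
    SqInv (|x| / D) 0 ((sqRNN D).hid (fun _ => x) 0) := by
  have hD0 : (0:ℝ) < D := by linarith
  have pre : ∀ i, (sqRNN D).hid (fun _ => x) 0 i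
      = max 0 (((sqRNN D).Ax.mulVec (fun _ => x) + (sqRNN D).bh) i) := fun _ => rfl
  have r0 : (((sqRNN D).Ax.mulVec (fun _ => x) + (sqRNN D).bh)) 0 = x / D := by
    simp only [sqRNN, Pi.add_apply, Matrix.mulVec, dotProduct, Fin.sum_univ_one,
      Matrix.of_apply, vec7_0, Matrix.cons_val_zero]
    ring
  have r1 : (((sqRNN D).Ax.mulVec (fun _ => x) + (sqRNN D).bh)) 1 = -(x / D) := by
    simp only [sqRNN, Pi.add_apply, Matrix.mulVec, dotProduct, Fin.sum_univ_one,
      Matrix.of_apply, vec7_1, Matrix.cons_val_zero]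
    ring
  have r2 : (((sqRNN D).Ax.mulVec (fun _ => x) + (sqRNN D).bh)) 2 = x / D - 1/2 := by
    simp only [sqRNN, Pi.add_apply, Matrix.mulVec, dotProduct, Fin.sum_univ_one,
      Matrix.of_apply, vec7_2, Matrix.cons_val_zero]
    ring
  have r3 : (((sqRNN D).Ax.mulVec (fun _ => x) + (sqRNN D).bh)) 3 = -(x / D) - 1/2 := by
    simp only [sqRNN, Pi.add_apply, Matrix.mulVec, dotProduct, Fin.sum_univ_one,
      Matrix.of_apply, vec7_3, Matrix.cons_val_zero]
    ring
  have r4 : (((sqRNN D).Ax.mulVec (fun _ => x) + (sqRNN D).bh)) 4 = 0 := by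
    simp only [sqRNN, Pi.add_apply, Matrix.mulVec, dotProduct, Fin.sum_univ_one,
      Matrix.of_apply, vec7_4, Matrix.cons_val_zero]
    ring
  have r5 : (((sqRNN D).Ax.mulVec (fun _ => x) + (sqRNN D).bh)) 5 = 1 := by
    simp only [sqRNN, Pi.add_apply, Matrix.mulVec, dotProduct, Fin.sum_univ_one,
      Matrix.of_apply, vec7_5, Matrix.cons_val_zero]
    ring
  have r6 : (((sqRNN D).Ax.mulVec (fun _ => x) + (sqRNN D).bh)) 6 = 1 := by
    simp only [sqRNN, Pi.add_apply, Matrix.mulVec, dotProduct, Fin.sum_univ_one,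
      Matrix.of_apply, vec7_6, Matrix.cons_val_zero]
    ring
  have habs : |x / D| = |x| / D := by rw [abs_div, abs_of_pos hD0]
  refine ⟨?_, ?_, ?_, ?_, ?_, ?_, ?_, ?_, ?_⟩
  · rw [pre 0, pre 1, r0, r1]
    simp only [GG, pow_zero, inv_one, one_mul]
    rw [max_add_neg_abs (x/D), habs]
  · rw [pre 0]; exact le_max_left _ _
  · rw [pre 1]; exact le_max_left _ _
  · rw [pre 2, pre 3, r2, r3]
    simp only [GG, pow_zero, inv_one, one_mul]
    rw [max_half_abs (x/D), habs]
  · rw [pre 2]; exact le_max_left _ _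
  · rw [pre 3]; exact le_max_left _ _
  · rw [pre 4, r4]
    simp only [GG, pow_zero, inv_one, one_mul]
    norm_num
  · rw [pre 5, r5]
    simp only [pow_zero, inv_one]
    norm_num
  · rw [pre 6, r6]
    norm_num

lemma sq_step {D y : ℝ} (hy : y ∈ Set.Icc (0:ℝ) 1) (t : ℕ) (h : Fin 7 → ℝ)
    (ih : SqInv y t h) :
    SqInv y (t+1) (relu ((sqRNN D).Ah.mulVec h + (sqRNN D).bh)) := by
  obtain ⟨e01, h0n, h1n, e23, h2n, h3n, e4, e5, e6⟩ := ih
  have hc : (0:ℝ) < ((4:ℝ) ^ t)⁻¹ := by positivity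
  have hG := GG_mem hy t
  have hG' := GG_mem hy (t+1)
  have hGg : GG y (t+1) = gg (GG y t) := rfl
  have hc4 : ((4:ℝ) ^ (t+1))⁻¹ = ((4:ℝ) ^ t)⁻¹ / 4 := by rw [pow_succ]; field_simp
  have pre : ∀ i, relu ((sqRNN D).Ah.mulVec h + (sqRNN D).bh) i
      = max 0 (((sqRNN D).Ah.mulVec h + (sqRNN D).bh) i) := fun _ => rfl
  have ev1 : ((sqRNN D).Ah.mulVec h + (sqRNN D).bh) 1 = 0 := by
    simp only [sqRNN, Pi.add_apply, Matrix.mulVec, dotProduct, Fin.sum_univ_seven,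
      Matrix.of_apply, vec7_0, vec7_1, vec7_2, vec7_3, vec7_4, vec7_5, vec7_6]
    ring
  have ev3 : ((sqRNN D).Ah.mulVec h + (sqRNN D).bh) 3 = -(1/2) := by
    simp only [sqRNN, Pi.add_apply, Matrix.mulVec, dotProduct, Fin.sum_univ_seven,
      Matrix.of_apply, vec7_0, vec7_1, vec7_2, vec7_3, vec7_4, vec7_5, vec7_6]
    ring
  have ev5 : ((sqRNN D).Ah.mulVec h + (sqRNN D).bh) 5 = 1/4 * h 5 - h 6 + 1 := by
    simp only [sqRNN, Pi.add_apply, Matrix.mulVec, dotProduct, Fin.sum_univ_seven,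
      Matrix.of_apply, vec7_0, vec7_1, vec7_2, vec7_3, vec7_4, vec7_5, vec7_6]
    ring
  have ev6 : ((sqRNN D).Ah.mulVec h + (sqRNN D).bh) 6 = 1 := by
    simp only [sqRNN, Pi.add_apply, Matrix.mulVec, dotProduct, Fin.sum_univ_seven,
      Matrix.of_apply, vec7_0, vec7_1, vec7_2, vec7_3, vec7_4, vec7_5, vec7_6]
    ring
  -- value of the pre-activations
  have q0 : ((sqRNN D).Ah.mulVec h + (sqRNN D).bh) 0 = ((4:ℝ) ^ (t+1))⁻¹ * gg (GG y t) := by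
    have e : ((sqRNN D).Ah.mulVec h + (sqRNN D).bh) 0 = 1/2*h 0 + 1/2*h 1 - h 2 - h 3 := by
      simp only [sqRNN, Pi.add_apply, Matrix.mulVec, dotProduct, Fin.sum_univ_seven,
        Matrix.of_apply, vec7_0, vec7_1, vec7_2, vec7_3, vec7_4, vec7_5, vec7_6]
      ring
    rw [e, hc4]
    have : 1/2*h 0 + 1/2*h 1 - h 2 - h 3 = 1/2*(h 0 + h 1) - (h 2 + h 3) := by ring
    rw [this, e01, e23]; unfold gg; ring
  have q2 : ((sqRNN D).Ah.mulVec h + (sqRNN D).bh) 2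
      = ((4:ℝ) ^ (t+1))⁻¹ * (gg (GG y t) - 1/2) := by
    have e : ((sqRNN D).Ah.mulVec h + (sqRNN D).bh) 2
        = 1/2*h 0 + 1/2*h 1 - h 2 - h 3 - 1/8*h 5 + 1/2*h 6 - 1/2 := by
      simp only [sqRNN, Pi.add_apply, Matrix.mulVec, dotProduct, Fin.sum_univ_seven,
        Matrix.of_apply, vec7_0, vec7_1, vec7_2, vec7_3, vec7_4, vec7_5, vec7_6]
      ring
    rw [e, hc4]
    have : 1/2*h 0 + 1/2*h 1 - h 2 - h 3 - 1/8*h 5 + 1/2*h 6 - 1/2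
        = 1/2*(h 0 + h 1) - (h 2 + h 3) - 1/8*h 5 + 1/2*h 6 - 1/2 := by ring
    rw [this, e01, e23, e5, e6]; unfold gg; ring
  have q4 : ((sqRNN D).Ah.mulVec h + (sqRNN D).bh) 4
      = y ^ 2 - ((4:ℝ) ^ (t+1))⁻¹ * (gg (GG y t)) ^ 2 := by
    have e : ((sqRNN D).Ah.mulVec h + (sqRNN D).bh) 4 = 2*h 2 + 2*h 3 + h 4 := by
      simp only [sqRNN, Pi.add_apply, Matrix.mulVec, dotProduct, Fin.sum_univ_seven,
        Matrix.of_apply, vec7_0, vec7_1, vec7_2, vec7_3, vec7_4, vec7_5, vec7_6]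
      ring
    rw [e]
    have : 2*h 2 + 2*h 3 + h 4 = 2*(h 2 + h 3) + h 4 := by ring
    rw [this, e23, e4, hc4, gg_sq]; ring
  have hc1 : (0:ℝ) ≤ ((4:ℝ) ^ (t+1))⁻¹ := by positivity
  refine ⟨?_, ?_, ?_, ?_, ?_, ?_, ?_, ?_, ?_⟩
  · rw [pre 0, pre 1, q0, ev1]
    rw [relu_mul hc1, max_eq_right (hGg ▸ hG'.1)]
    simp [hGg]
  · rw [pre 0]; exact le_max_left _ _
  · rw [pre 1]; exact le_max_left _ _
  · rw [pre 2, pre 3, q2, ev3]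
    rw [relu_mul hc1]
    rw [max_eq_left (by norm_num : (-(1/2):ℝ) ≤ 0)]
    simp [hGg]
  · rw [pre 2]; exact le_max_left _ _
  · rw [pre 3]; exact le_max_left _ _
  · rw [pre 4, q4]
    rw [max_eq_right]
    · rw [hGg]
    · rw [← hGg]
      have := GG_sq_le hy (t+1)
      linarith
  · rw [pre 5, ev5]
    rw [e6, e5]
    have e : (1:ℝ)/4 * ((4:ℝ)^t)⁻¹ - 1 + 1 = ((4:ℝ)^(t+1))⁻¹ := by rw [hc4]; ring
    rw [e, max_eq_right (by positivity)]
  · rw [pre 6, ev6]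
    norm_num

lemma sq_norm_bound {y : ℝ} (hy : y ∈ Set.Icc (0:ℝ) 1) (t : ℕ) (h : Fin 7 → ℝ)
    (inv : SqInv y t h) : ‖h‖ ≤ 1 := by
  obtain ⟨e01, h0n, h1n, e23, h2n, h3n, e4, e5, e6⟩ := inv
  have hc : (0:ℝ) < ((4:ℝ) ^ t)⁻¹ := by positivity
  have hc1 : ((4:ℝ) ^ t)⁻¹ ≤ 1 := by
    rw [inv_le_one_iff₀]; right; exact one_le_pow₀ (by norm_num)
  have hG0 := (GG_mem hy t).1
  have hG1 := (GG_mem hy t).2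
  refine (pi_norm_le_iff_of_nonneg zero_le_one).mpr ?_
  have hcg : ((4:ℝ) ^ t)⁻¹ * GG y t ≤ 1 := mul_le_one₀ hc1 hG0 hG1
  have hm : max 0 (GG y t - 1/2) ≤ 1 := max_le (by norm_num) (by linarith)
  have hmn : (0:ℝ) ≤ max 0 (GG y t - 1/2) := le_max_left _ _
  have hcm : ((4:ℝ) ^ t)⁻¹ * max 0 (GG y t - 1/2) ≤ 1 := mul_le_one₀ hc1 hmn hm
  have hcG := GG_sq_le hy t
  have b0 : h 0 ≤ 1 := by linarith
  have b1 : h 1 ≤ 1 := by linarith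
  have b2 : h 2 ≤ 1 := by linarith
  have b3 : h 3 ≤ 1 := by linarith
  have hy2 : y ^ 2 ≤ 1 := by nlinarith [hy.1, hy.2]
  have hGsq : (0:ℝ) ≤ ((4:ℝ) ^ t)⁻¹ * (GG y t) ^ 2 := by positivity
  have b4 : 0 ≤ h 4 ∧ h 4 ≤ 1 := ⟨by rw [e4]; linarith, by rw [e4]; linarith⟩
  have bnd : ∀ i : Fin 7, 0 ≤ h i ∧ h i ≤ 1 := by
    intro i
    fin_cases i
    · exact ⟨h0n, b0⟩
    · exact ⟨h1n, b1⟩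
    · exact ⟨h2n, b2⟩
    · exact ⟨h3n, b3⟩
    · exact b4
    · exact ⟨hc.le.trans_eq e5.symm, e5.le.trans hc1⟩
    · exact ⟨zero_le_one.trans_eq e6.symm, e6.le⟩
  intro i
  rw [Real.norm_eq_abs, abs_le]
  exact ⟨le_trans (by norm_num) (bnd i).1, (bnd i).2⟩
/-- Theorem (squaring RNN): for every `D ≥ 1` there is an RNN with input dimension 1,
output dimension 1, and hidden state size 7 such that for all `x ∈ [−D, D]` and `t ∈ ℕ₀`:
`|(R 𝒟 x)[t] − x²| ≤ (D²/4)·4^{−t}`, `‖(K 𝒟 x)[t]‖∞ ≤ 1`, and `0 ≤ (R 𝒟 x)[t] ≤ D²`. -/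
theorem stmt2 (D : ℝ) (hD : 1 ≤ D) :
    ∃ R : RNN (Fin 1) (Fin 7) (Fin 1),
      ∀ x : ℝ, x ∈ Set.Icc (-D) D → ∀ t : ℕ,
        |R.out (fun _ => x) t 0 - x ^ 2| ≤ D ^ 2 / 4 * (4 : ℝ) ^ (-(t : ℤ)) ∧
        ‖R.hid (fun _ => x) t‖ ≤ 1 ∧
        0 ≤ R.out (fun _ => x) t 0 ∧ R.out (fun _ => x) t 0 ≤ D ^ 2 := by
  have hD0 : (0:ℝ) < D := by linarith
  refine ⟨sqRNN D, fun x hx t => ?_⟩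
  have hxD : |x| ≤ D := abs_le.mpr ⟨hx.1, hx.2⟩
  set y : ℝ := |x| / D with hy_def
  have hy : y ∈ Set.Icc (0:ℝ) 1 :=
    ⟨div_nonneg (abs_nonneg x) hD0.le, (div_le_one hD0).mpr hxD⟩
  have hInv : SqInv y t ((sqRNN D).hid (fun _ => x) t) := by
    induction t with
    | zero => exact sq_base hD x
    | succ t ih => exact sq_step hy t _ ih
  set h : Fin 7 → ℝ := (sqRNN D).hid (fun _ => x) t with hh
  have hInv2 : SqInv y t h := hInv
  obtain ⟨e01, h0n, h1n, e23, h2n, h3n, e4, e5, e6⟩ := hInv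
  have hc : (0:ℝ) < ((4:ℝ) ^ t)⁻¹ := by positivity
  have hc1 : ((4:ℝ) ^ t)⁻¹ ≤ 1 := by
    rw [inv_le_one_iff₀]; right; exact one_le_pow₀ (by norm_num)
  have hG := GG_mem hy t
  have hsq : D ^ 2 * y ^ 2 = x ^ 2 := by
    rw [hy_def, div_pow, sq_abs]
    field_simp
  -- output value
  have hout : (sqRNN D).out (fun _ => x) t 0 = D^2 * h 0 + D^2 * h 1 + D^2 * h 4 := by
    show ((sqRNN D).Ao.mulVec h + (sqRNN D).bo) 0 = _
    simp only [sqRNN, Pi.add_apply, Matrix.mulVec, dotProduct, Fin.sum_univ_seven,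
      Matrix.of_apply, vec7_0, vec7_1, vec7_2, vec7_3, vec7_4, vec7_5, vec7_6,
      Matrix.cons_val_zero]
    ring
  have hout2 : (sqRNN D).out (fun _ => x) t 0
      = x ^ 2 + D ^ 2 * (((4:ℝ) ^ t)⁻¹ * (GG y t * (1 - GG y t))) := by
    rw [hout]
    have : D^2 * h 0 + D^2 * h 1 + D^2 * h 4 = D^2 * ((h 0 + h 1) + h 4) := by ring
    rw [this, e01, e4, ← hsq]; ring
  clear_value h
  have hzpow : ((4:ℝ) : ℝ) ^ (-(t:ℤ)) = ((4:ℝ) ^ t)⁻¹ := by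
    rw [zpow_neg, zpow_natCast]
  have hGG01 : 0 ≤ GG y t * (1 - GG y t) ∧ GG y t * (1 - GG y t) ≤ 1/4 := by
    constructor <;> nlinarith [hG.1, hG.2, sq_nonneg (GG y t - 1/2)]
  refine ⟨?_, ?_, ?_, ?_⟩
  · rw [hout2, hzpow]
    rw [add_sub_cancel_left]
    have hnn : (0:ℝ) ≤ D ^ 2 * (((4:ℝ) ^ t)⁻¹ * (GG y t * (1 - GG y t))) :=
      mul_nonneg (by positivity) (mul_nonneg hc.le hGG01.1)
    rw [abs_of_nonneg hnn]
    calc D ^ 2 * (((4:ℝ) ^ t)⁻¹ * (GG y t * (1 - GG y t)))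
        ≤ D ^ 2 * (((4:ℝ) ^ t)⁻¹ * (1/4)) :=
          mul_le_mul_of_nonneg_left
            (mul_le_mul_of_nonneg_left hGG01.2 hc.le) (by positivity)
      _ = D ^ 2 / 4 * ((4:ℝ) ^ t)⁻¹ := by ring
  · exact sq_norm_bound hy t h hInv2
  · rw [hout]
    have h4n : 0 ≤ h 4 := by
      rw [e4]
      have := GG_sq_le hy t
      linarith
    positivity
  · rw [hout2]
    have hF := F_le hy t
    have : x ^ 2 = D ^ 2 * y ^ 2 := hsq.symm
    rw [this]
    have hD2 : (0:ℝ) ≤ D ^ 2 := by positivity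
    have hyle : y ≤ 1 := hy.2
    nlinarith
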